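/- For the SubsetSum instance, the set of diffs from β_S to β_T under F(≤≥,+) contains a best diff F such that for every k ∈ {1,…,n}, F contains exactly one gap operation at k, and this gap operation is either (A ≤ k−1, B ← B − s_k) or (A ≥ k, B ← B + s_k). -/

import Mathlib

open scoped Classical

/-- An operation of the family `F(≤≥,+)`: if `dir = true` the condition is `A ≤ a`,
otherwise the condition is `A ≥ a`; the modifier is the increment `B ← B + b`. -/
structure OpIneqAdd where
  dir : Bool
  a : ℝ
  b : ℝ

/-- The condition of an operation, evaluated on an `A`-value `v`. -/
def OpIneqAdd.cond (f : OpIneqAdd) (v : ℤ) : Prop :=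
  if f.dir then (v : ℝ) ≤ f.a else f.a ≤ (v : ℝ)

/-- Applying an operation: every key whose `A`-value satisfies the condition gets
its `B`-value incremented by `b`; other keys are unchanged. -/
noncomputable def OpIneqAdd.apply {K : Type*} (α : K → ℤ) (f : OpIneqAdd) (β : K → ℝ) :
    K → ℝ :=
  fun k => if f.cond (α k) then β k + f.b else β k

/-- Successive application of a finite sequence of operations. -/
noncomputable def applyOpsIneqAdd {K : Type*} (α : K → ℤ) (L : List OpIneqAdd) (β : K → ℝ) :
    K → ℝ :=
  L.foldl (fun β' f => f.apply α β') β

/-- `L` is a diff from `βS` to `βT` under `F(≤≥,+)`. -/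
def IsDiffIneqAdd {K : Type*} (α : K → ℤ) (L : List OpIneqAdd) (βS βT : K → ℝ) : Prop :=
  applyOpsIneqAdd α L βS = βT

/-- `L` is a best diff: a diff of minimum cost (the cost being the number of operations). -/
def IsBestDiffIneqAdd {K : Type*} (α : K → ℤ) (L : List OpIneqAdd) (βS βT : K → ℝ) : Prop :=
  IsDiffIneqAdd α L βS βT ∧
    ∀ L' : List OpIneqAdd, IsDiffIneqAdd α L' βS βT → L.length ≤ L'.length

/-- `A`-values of the SubsetSum instance: `α k = k` on the key set `K = {0,…,n}`. -/
def ssAlpha (n : ℕ) : Fin (n + 1) → ℤ := fun k => ((k : ℕ) : ℤ)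

/-- Source `B`-values of the SubsetSum instance: identically `0`. -/
def ssBS (n : ℕ) : Fin (n + 1) → ℝ := fun _ => 0

/-- Target `B`-values of the SubsetSum instance: `β_T k = b_k = ∑_{ℓ=0}^{k} s ℓ`. -/
noncomputable def ssBT (n : ℕ) (s : ℕ → ℤ) : Fin (n + 1) → ℝ :=
  fun k => ((∑ ℓ ∈ Finset.range ((k : ℕ) + 1), s ℓ : ℤ) : ℝ)

/-- A gap operation at `k ∈ {1,…,n}` is an operation with condition `A ≤ k - 1`
or with condition `A ≥ k`. -/
def IsGapOpAt (k : ℕ) (f : OpIneqAdd) : Prop :=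
  (f.dir = true ∧ f.a = (k : ℝ) - 1) ∨ (f.dir = false ∧ f.a = (k : ℝ))

namespace SSAux

open Finset

noncomputable def contrib (f : OpIneqAdd) (v : ℤ) : ℝ := if f.cond v then f.b else 0

lemma apply_eq {K : Type*} (α : K → ℤ) (f : OpIneqAdd) (β : K → ℝ) (k : K) :
    f.apply α β k = β k + contrib f (α k) := by
  unfold OpIneqAdd.apply contrib
  split <;> simp

lemma eval {K : Type*} (α : K → ℤ) (L : List OpIneqAdd) (β : K → ℝ) (k : K) :
    applyOpsIneqAdd α L β k = β k + ∑ i : Fin L.length, contrib (L.get i) (α k) := by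
  induction L generalizing β with
  | nil => simp [applyOpsIneqAdd]
  | cons f L ih =>
      have h1 : applyOpsIneqAdd α (f :: L) β = applyOpsIneqAdd α L (f.apply α β) := rfl
      rw [h1, ih, apply_eq]
      simp only [List.length_cons, Fin.sum_univ_succ, List.get]
      show _ = β k + (contrib f (α k) + ∑ i : Fin L.length, contrib (L.get i) (α k))
      ring

lemma diff_iff {K : Type*} (α : K → ℤ) (L : List OpIneqAdd) (βS βT : K → ℝ) :
    IsDiffIneqAdd α L βS βT ↔
      ∀ k : K, βS k + ∑ i : Fin L.length, contrib (L.get i) (α k) = βT k := by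
  unfold IsDiffIneqAdd
  constructor
  · intro h k; rw [← eval, h]
  · intro h; funext k; rw [eval, h]

lemma cond_int (f : OpIneqAdd) (v : ℤ) :
    f.cond v ↔ (if f.dir then v ≤ ⌊f.a⌋ else ⌈f.a⌉ ≤ v) := by
  unfold OpIneqAdd.cond
  rcases f.dir with _ | _ <;> simp [Int.le_floor, Int.ceil_le]

noncomputable def gapIdx (f : OpIneqAdd) : ℤ := if f.dir then ⌊f.a⌋ + 1 else ⌈f.a⌉

lemma contrib_eq_of_ne (f : OpIneqAdd) (k : ℤ) (h : gapIdx f ≠ k) :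
    contrib f k = contrib f (k - 1) := by
  obtain ⟨dir, a, b⟩ := f
  unfold contrib gapIdx at *
  simp only [cond_int] at *
  cases dir <;>
    simp only [if_true, if_false, Bool.false_eq_true, Bool.true_eq_false, ite_true,
      ite_false] at * <;>
    split_ifs <;> (try (exfalso; omega)) <;> rfl

lemma contrib_diff (f : OpIneqAdd) (k : ℤ) (h : gapIdx f = k) :
    contrib f k - contrib f (k - 1) = (if f.dir then -f.b else f.b) := by
  obtain ⟨dir, a, b⟩ := f
  unfold contrib gapIdx at *
  simp only [cond_int] at *
  cases dir <;>
    simp only [if_true, if_false, Bool.false_eq_true, Bool.true_eq_false, ite_true,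
      ite_false] at * <;>
    split_ifs <;> (try (exfalso; omega)) <;> ring

lemma contrib_zero (f : OpIneqAdd) (k : ℤ) (h : gapIdx f = k) (hk : 1 ≤ k) :
    contrib f 0 = (if f.dir then f.b else 0) := by
  obtain ⟨dir, a, b⟩ := f
  unfold contrib gapIdx at *
  simp only [cond_int] at *
  cases dir <;>
    simp only [if_true, if_false, Bool.false_eq_true, Bool.true_eq_false, ite_true,
      ite_false] at * <;>
    split_ifs <;> (try (exfalso; omega)) <;> rfl


lemma sum_get (L : List OpIneqAdd) (G : OpIneqAdd → ℝ) :
    ∑ i : Fin L.length, G (L.get i) = (L.map G).sum := by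
  induction L with
  | nil => simp
  | cons f L ih =>
      simp only [List.length_cons, Fin.sum_univ_succ, List.get, List.map_cons, List.sum_cons]
      rw [← ih]
      rfl

lemma diff_spec (n : ℕ) (s : ℕ → ℤ) (L : List OpIneqAdd)
    (hL : IsDiffIneqAdd (ssAlpha n) L (ssBS n) (ssBT n s)) (k : ℕ) (hk : k ≤ n) :
    ∑ i : Fin L.length, contrib (L.get i) (k : ℤ) =
      ∑ ℓ ∈ Finset.range (k + 1), (s ℓ : ℝ) := by
  have h := (diff_iff _ L _ _).1 hL ⟨k, by omega⟩
  simp only [ssBS, ssAlpha, ssBT, zero_add] at h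
  rw [h]
  push_cast
  rfl

lemma exists_gap (n : ℕ) (s : ℕ → ℤ) (hpos : ∀ i, 1 ≤ i → i ≤ n → 0 < s i)
    (L : List OpIneqAdd) (hL : IsDiffIneqAdd (ssAlpha n) L (ssBS n) (ssBT n s))
    (k : ℕ) (hk1 : 1 ≤ k) (hkn : k ≤ n) :
    ∃ i : Fin L.length, gapIdx (L.get i) = (k : ℤ) := by
  have h1 := diff_spec n s L hL k hkn
  have h0 := diff_spec n s L hL (k - 1) (by omega)
  have hcast : ((k - 1 : ℕ) : ℤ) = (k : ℤ) - 1 := by omega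
  rw [hcast] at h0
  have hrange : k - 1 + 1 = k := by omega
  rw [hrange] at h0
  have hsum : ∑ i : Fin L.length,
      (contrib (L.get i) (k : ℤ) - contrib (L.get i) ((k : ℤ) - 1)) = (s k : ℝ) := by
    rw [Finset.sum_sub_distrib, h1, h0, Finset.sum_range_succ]
    ring
  by_contra hno
  push_neg at hno
  have : ∀ i : Fin L.length,
      contrib (L.get i) (k : ℤ) - contrib (L.get i) ((k : ℤ) - 1) = 0 := by
    intro i
    rw [contrib_eq_of_ne (L.get i) (k : ℤ) (hno i)]
    ring
  rw [Finset.sum_congr rfl (fun i _ => this i), Finset.sum_const, smul_zero] at hsum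
  have := hpos k hk1 hkn
  have : (0 : ℝ) < (s k : ℝ) := by exact_mod_cast this
  linarith [hsum]

lemma length_lb (n : ℕ) (s : ℕ → ℤ) (hpos : ∀ i, 1 ≤ i → i ≤ n → 0 < s i)
    (L : List OpIneqAdd) (hL : IsDiffIneqAdd (ssAlpha n) L (ssBS n) (ssBT n s)) :
    n ≤ L.length := by
  rcases Nat.eq_zero_or_pos n with hn | hn
  · omega
  obtain ⟨i0, _⟩ := exists_gap n s hpos L hL 1 le_rfl hn
  classical
  set g : ℕ → Fin L.length := fun k =>
    if h : 1 ≤ k ∧ k ≤ n then (exists_gap n s hpos L hL k h.1 h.2).choose else i0 with hgdef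
  have hg : ∀ k, 1 ≤ k → k ≤ n → gapIdx (L.get (g k)) = (k : ℤ) := by
    intro k h1 h2
    simp only [hgdef, dif_pos (And.intro h1 h2)]
    exact (exists_gap n s hpos L hL k h1 h2).choose_spec
  have hinj : Set.InjOn g (Finset.Icc 1 n) := by
    intro a ha b hb hab
    simp only [Finset.coe_Icc, Set.mem_Icc] at ha hb
    have h1 := hg a ha.1 ha.2
    have h2 := hg b hb.1 hb.2
    rw [hab, h2] at h1
    exact_mod_cast h1.symm
  calc n = (Finset.Icc 1 n).card := by rw [Nat.card_Icc]; omega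
    _ ≤ (Finset.univ : Finset (Fin L.length)).card :=
        Finset.card_le_card_of_injOn g (fun a _ => Finset.mem_univ _) hinj
    _ = L.length := by simp


lemma extract_subset (n : ℕ) (s : ℕ → ℤ) (t : ℤ) (ht : 0 < t) (hs0 : s 0 = -t)
    (hpos : ∀ i, 1 ≤ i → i ≤ n → 0 < s i)
    (L : List OpIneqAdd) (hL : IsDiffIneqAdd (ssAlpha n) L (ssBS n) (ssBT n s))
    (hlen : L.length = n) :
    ∃ Sp : Finset ℕ, Sp ⊆ Finset.Icc 1 n ∧ ∑ k ∈ Sp, (s k : ℝ) = (t : ℝ) := by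
  classical
  have h0 : ∑ i : Fin L.length, contrib (L.get i) ((0 : ℕ) : ℤ) = -(t : ℝ) := by
    have h := diff_spec n s L hL 0 (Nat.zero_le n)
    rw [h]
    simp [hs0]
  rcases Nat.eq_zero_or_pos n with hn | hn
  · exfalso
    have : L = [] := List.length_eq_zero_iff.mp (by omega)
    subst this
    simp at h0
    have : (0:ℝ) < (t:ℝ) := by exact_mod_cast ht
    linarith
  obtain ⟨i0, _⟩ := exists_gap n s hpos L hL 1 le_rfl hn
  set g : ℕ → Fin L.length := fun k =>
    if h : 1 ≤ k ∧ k ≤ n then (exists_gap n s hpos L hL k h.1 h.2).choose else i0 with hgdef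
  have hg : ∀ k, 1 ≤ k → k ≤ n → gapIdx (L.get (g k)) = (k : ℤ) := by
    intro k h1 h2
    simp only [hgdef, dif_pos (And.intro h1 h2)]
    exact (exists_gap n s hpos L hL k h1 h2).choose_spec
  have hinj : Set.InjOn g (Finset.Icc 1 n) := by
    intro a ha b hb hab
    simp only [Finset.coe_Icc, Set.mem_Icc] at ha hb
    have h1 := hg a ha.1 ha.2
    have h2 := hg b hb.1 hb.2
    rw [hab, h2] at h1
    exact_mod_cast h1.symm
  have himg : (Finset.Icc 1 n).image g = Finset.univ := by
    apply Finset.eq_univ_of_card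
    rw [Finset.card_image_of_injOn hinj, Nat.card_Icc, Fintype.card_fin, hlen]
    omega
  have huniq : ∀ (k : ℕ), 1 ≤ k → k ≤ n → ∀ i : Fin L.length,
      gapIdx (L.get i) = (k : ℤ) → i = g k := by
    intro k h1 h2 i hi
    have hmem : i ∈ (Finset.Icc 1 n).image g := by rw [himg]; exact Finset.mem_univ i
    obtain ⟨k', hk', hk'i⟩ := Finset.mem_image.1 hmem
    rw [Finset.mem_Icc] at hk'
    have hgk' := hg k' hk'.1 hk'.2
    rw [hk'i, hi] at hgk'
    have : k' = k := by exact_mod_cast hgk'.symm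
    subst this
    exact hk'i.symm
  have hval : ∀ k, 1 ≤ k → k ≤ n →
      contrib (L.get (g k)) (k : ℤ) - contrib (L.get (g k)) ((k : ℤ) - 1) = (s k : ℝ) := by
    intro k h1 h2
    have h1' := diff_spec n s L hL k h2
    have h0' := diff_spec n s L hL (k - 1) (by omega)
    have hcast : ((k - 1 : ℕ) : ℤ) = (k : ℤ) - 1 := by omega
    have hr : k - 1 + 1 = k := by omega
    rw [hcast, hr] at h0'
    have hsum : ∑ i : Fin L.length,
        (contrib (L.get i) (k : ℤ) - contrib (L.get i) ((k : ℤ) - 1)) = (s k : ℝ) := by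
      rw [Finset.sum_sub_distrib, h1', h0', Finset.sum_range_succ]
      ring
    rw [← hsum]
    symm
    apply Finset.sum_eq_single (g k)
    · intro i _ hne
      rw [contrib_eq_of_ne]
      · ring
      · intro hgap
        exact hne (huniq k h1 h2 i hgap)
    · intro h
      exact absurd (Finset.mem_univ _) h
  have hb : ∀ k, 1 ≤ k → k ≤ n →
      contrib (L.get (g k)) ((0:ℕ) : ℤ) = (if (L.get (g k)).dir then -(s k : ℝ) else 0) := by
    intro k h1 h2
    have hd := contrib_diff (L.get (g k)) (k : ℤ) (hg k h1 h2)
    have hz := contrib_zero (L.get (g k)) (k : ℤ) (hg k h1 h2) (by exact_mod_cast h1)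
    rw [hval k h1 h2] at hd
    push_cast
    rw [hz]
    by_cases hdir : (L.get (g k)).dir = true
    · simp only [if_pos hdir] at hd ⊢
      linarith
    · simp only [if_neg hdir] at hd ⊢
  have hsum0 : ∑ k ∈ Finset.Icc 1 n, contrib (L.get (g k)) ((0:ℕ) : ℤ) = -(t : ℝ) := by
    rw [← h0, ← himg]
    rw [Finset.sum_image (fun x hx y hy hxy => hinj (Finset.mem_coe.2 hx) (Finset.mem_coe.2 hy) hxy)]
  have hfin : ∑ k ∈ Finset.Icc 1 n, (if (L.get (g k)).dir then (s k : ℝ) else 0) = (t : ℝ) := by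
    have h3 : ∑ k ∈ Finset.Icc 1 n,
        (if (L.get (g k)).dir then -(s k : ℝ) else 0) = -(t : ℝ) := by
      rw [← hsum0]
      exact Finset.sum_congr rfl (fun k hk =>
        ((hb k (Finset.mem_Icc.1 hk).1 (Finset.mem_Icc.1 hk).2)).symm)
    have h4 : ∀ k, (if (L.get (g k)).dir then -(s k : ℝ) else 0)
        = -(if (L.get (g k)).dir then (s k : ℝ) else 0) := by
      intro k
      split_ifs <;> ring
    rw [Finset.sum_congr rfl (fun k _ => h4 k)] at h3
    rw [Finset.sum_neg_distrib] at h3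
    linarith
  refine ⟨(Finset.Icc 1 n).filter (fun k => (L.get (g k)).dir = true),
    Finset.filter_subset _ _, ?_⟩
  rw [Finset.sum_filter]
  exact hfin


lemma contrib_prefix (k : ℕ) (c : ℝ) (v : ℕ) :
    contrib ⟨true, (k : ℝ) - 1, c⟩ (v : ℤ) = if v < k then c else 0 := by
  have h : (⟨true, (k : ℝ) - 1, c⟩ : OpIneqAdd).cond (v : ℤ) ↔ v < k := by
    show (((v : ℤ) : ℝ) ≤ (k : ℝ) - 1) ↔ v < k
    rw [le_sub_iff_add_le]
    norm_cast
  unfold contrib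
  exact if_congr h rfl rfl

lemma contrib_suffix (k : ℕ) (c : ℝ) (v : ℕ) :
    contrib ⟨false, (k : ℝ), c⟩ (v : ℤ) = if k ≤ v then c else 0 := by
  have h : (⟨false, (k : ℝ), c⟩ : OpIneqAdd).cond (v : ℤ) ↔ k ≤ v := by
    show ((k : ℝ) ≤ ((v : ℤ) : ℝ)) ↔ k ≤ v
    norm_cast
  unfold contrib
  exact if_congr h rfl rfl

lemma contrib_top (n : ℕ) (c : ℝ) (v : ℕ) (hv : v ≤ n) :
    contrib ⟨true, (n : ℝ), c⟩ (v : ℤ) = c := by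
  unfold contrib
  rw [if_pos]
  show ((v : ℤ) : ℝ) ≤ (n : ℝ)
  exact_mod_cast hv

noncomputable def canonOp (s : ℕ → ℤ) (Sp : Finset ℕ) (k : ℕ) : OpIneqAdd :=
  if k ∈ Sp then ⟨true, (k : ℝ) - 1, -(s k : ℝ)⟩ else ⟨false, (k : ℝ), (s k : ℝ)⟩

lemma contrib_canon (s : ℕ → ℤ) (Sp : Finset ℕ) (k v : ℕ) :
    contrib (canonOp s Sp k) (v : ℤ) =
      if k ∈ Sp then (if v < k then -(s k : ℝ) else 0)
      else (if k ≤ v then (s k : ℝ) else 0) := by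
  unfold canonOp
  by_cases h : k ∈ Sp
  · simp only [if_pos h]
    exact contrib_prefix k _ v
  · simp only [if_neg h]
    exact contrib_suffix k _ v

lemma gap_canon (s : ℕ → ℤ) (Sp : Finset ℕ) (k m : ℕ) :
    IsGapOpAt k (canonOp s Sp m) ↔ m = k := by
  unfold canonOp IsGapOpAt
  by_cases h : m ∈ Sp
  · rw [if_pos h]
    constructor
    · rintro (⟨-, ha⟩ | ⟨hd, -⟩)
      · have : (m : ℝ) = (k : ℝ) := by
          have : (m : ℝ) - 1 = (k : ℝ) - 1 := ha
          linarith
        exact_mod_cast this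
      · simp at hd
    · rintro rfl
      exact Or.inl ⟨rfl, rfl⟩
  · rw [if_neg h]
    constructor
    · rintro (⟨hd, -⟩ | ⟨-, ha⟩)
      · simp at hd
      · have : (m : ℝ) = (k : ℝ) := ha
        exact_mod_cast this
    · rintro rfl
      exact Or.inr ⟨rfl, rfl⟩

lemma canon_form (s : ℕ → ℤ) (Sp : Finset ℕ) (k : ℕ) :
    canonOp s Sp k = ⟨true, (k : ℝ) - 1, -(s k : ℝ)⟩ ∨
    canonOp s Sp k = ⟨false, (k : ℝ), (s k : ℝ)⟩ := by
  unfold canonOp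
  by_cases h : k ∈ Sp
  · left; rw [if_pos h]
  · right; rw [if_neg h]

lemma sum_shift (n : ℕ) (G : ℕ → ℝ) :
    ∑ j ∈ Finset.range n, G (j + 1) = ∑ m ∈ Finset.Icc 1 n, G m := by
  rw [← Finset.Ico_add_one_right_eq_Icc, Finset.sum_Ico_eq_sum_range]
  simp [add_comm]

lemma icc_filter (n κ : ℕ) (hκ : κ ≤ n) (f : ℕ → ℝ) :
    ∑ m ∈ Finset.Icc 1 n, (if m ≤ κ then f m else 0) = ∑ m ∈ Finset.Icc 1 κ, f m := by
  rw [← Finset.sum_filter]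
  apply Finset.sum_congr _ (fun _ _ => rfl)
  ext m
  simp only [Finset.mem_filter, Finset.mem_Icc]
  omega

lemma rhs_form (n : ℕ) (s : ℕ → ℤ) (t : ℤ) (hs0 : s 0 = -t) (κ : ℕ) :
    ((∑ ℓ ∈ Finset.range (κ + 1), s ℓ : ℤ) : ℝ) =
      ∑ m ∈ Finset.Icc 1 κ, (s m : ℝ) - (t : ℝ) := by
  rw [← sum_shift κ (fun m => (s m : ℝ))]
  rw [Finset.sum_range_succ']
  push_cast [hs0]
  ring

lemma canon_diff (n : ℕ) (s : ℕ → ℤ) (t : ℤ) (hs0 : s 0 = -t)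
    (Sp : Finset ℕ) (hSp : Sp ⊆ Finset.Icc 1 n) (hsum : ∑ k ∈ Sp, (s k : ℝ) = (t : ℝ)) :
    IsDiffIneqAdd (ssAlpha n) (List.ofFn (fun i : Fin n => canonOp s Sp ((i : ℕ) + 1)))
      (ssBS n) (ssBT n s) := by
  rw [diff_iff]
  intro κ
  simp only [ssBS, ssAlpha, ssBT, zero_add]
  rw [sum_get (List.ofFn fun i : Fin n => canonOp s Sp ((i : ℕ) + 1))
    (fun f => contrib f ((κ : ℕ) : ℤ)), List.map_ofFn, List.sum_ofFn]
  have hκn : (κ : ℕ) ≤ n := by omega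
  set G : ℕ → ℝ := fun m =>
    if m ∈ Sp then (if (κ : ℕ) < m then -(s m : ℝ) else 0)
    else (if m ≤ (κ : ℕ) then (s m : ℝ) else 0) with hG
  have step1 : ∀ i : Fin n,
      (contrib (canonOp s Sp ((i : ℕ) + 1)) ((κ : ℕ) : ℤ)) = G ((i : ℕ) + 1) := by
    intro i
    exact contrib_canon s Sp _ _
  calc ∑ i : Fin n, contrib (canonOp s Sp ((i : ℕ) + 1)) ((κ : ℕ) : ℤ)
      = ∑ i : Fin n, G ((i : ℕ) + 1) := Finset.sum_congr rfl (fun i _ => step1 i)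
    _ = ∑ j ∈ Finset.range n, G (j + 1) := Fin.sum_univ_eq_sum_range (fun j => G (j + 1)) n
    _ = ∑ m ∈ Finset.Icc 1 n, G m := sum_shift n G
    _ = ∑ m ∈ Finset.Icc 1 n,
        ((if m ≤ (κ : ℕ) then (s m : ℝ) else 0) - (if m ∈ Sp then (s m : ℝ) else 0)) := by
        apply Finset.sum_congr rfl
        intro m hm
        simp only [hG]
        by_cases h1 : m ∈ Sp
        · simp only [if_pos h1]
          by_cases h2 : m ≤ (κ : ℕ)
          · rw [if_neg (by omega : ¬ (κ : ℕ) < m), if_pos h2]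
            ring
          · rw [if_pos (by omega : (κ : ℕ) < m), if_neg h2]
            ring
        · simp only [if_neg h1]
          split_ifs <;> ring
    _ = ((∑ ℓ ∈ Finset.range ((κ : ℕ) + 1), s ℓ : ℤ) : ℝ) := by
        rw [Finset.sum_sub_distrib, icc_filter n (κ : ℕ) hκn, rhs_form n s t hs0 (κ : ℕ)]
        have : ∑ m ∈ Finset.Icc 1 n, (if m ∈ Sp then (s m : ℝ) else 0) = (t : ℝ) := by
          rw [← Finset.sum_filter, Finset.filter_mem_eq_inter,
            Finset.inter_eq_right.2 hSp, hsum]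
        rw [this]


lemma exu (m : ℕ) (f : Fin m → OpIneqAdd) (k : ℕ) (j0 : Fin m)
    (h : ∀ j : Fin m, IsGapOpAt k (f j) ↔ j = j0) :
    (∃! i : Fin (List.ofFn f).length, IsGapOpAt k ((List.ofFn f).get i)) ∧
    (∀ i : Fin (List.ofFn f).length, IsGapOpAt k ((List.ofFn f).get i) →
      (List.ofFn f).get i = f j0) := by
  have hlen : (List.ofFn f).length = m := List.length_ofFn
  have hget : ∀ i : Fin (List.ofFn f).length,
      (List.ofFn f).get i = f (Fin.cast hlen i) := by
    intro i
    rw [List.get_ofFn]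
  constructor
  · refine ⟨Fin.cast hlen.symm j0, ?_, ?_⟩
    · simp only [hget, h]
      apply Fin.ext
      simp
    · intro i hi
      rw [hget, h] at hi
      apply Fin.ext
      have := congrArg Fin.val hi
      simpa using this
  · intro i hi
    rw [hget] at hi ⊢
    rw [h] at hi
    rw [hi]

noncomputable def suffOp (s : ℕ → ℤ) (m : ℕ) : OpIneqAdd := ⟨false, (m : ℝ), (s m : ℝ)⟩

noncomputable def f1fun (n : ℕ) (s : ℕ → ℤ) (t : ℤ) (j : ℕ) : OpIneqAdd :=
  if j = 0 then ⟨true, (n : ℝ), -(t : ℝ)⟩ else suffOp s j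

lemma gap_suff (s : ℕ → ℤ) (k m : ℕ) : IsGapOpAt k (suffOp s m) ↔ m = k := by
  unfold suffOp IsGapOpAt
  constructor
  · rintro (⟨hd, -⟩ | ⟨-, ha⟩)
    · simp at hd
    · have : (m : ℝ) = (k : ℝ) := ha
      exact_mod_cast this
  · rintro rfl
    exact Or.inr ⟨rfl, rfl⟩

lemma gap_f1 (n : ℕ) (s : ℕ → ℤ) (t : ℤ) (k j : ℕ) (hk1 : 1 ≤ k) (hkn : k ≤ n) :
    IsGapOpAt k (f1fun n s t j) ↔ j = k := by
  unfold f1fun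
  by_cases hj : j = 0
  · rw [if_pos hj]
    constructor
    · rintro (⟨-, ha⟩ | ⟨hd, -⟩)
      · exfalso
        have : (n : ℝ) = (k : ℝ) - 1 := ha
        have : (n : ℝ) + 1 = (k : ℝ) := by linarith
        have : n + 1 = k := by exact_mod_cast this
        omega
      · exfalso
        simp [IsGapOpAt] at hd
    · intro hjk
      omega
  · rw [if_neg hj]
    exact gap_suff s k j

lemma f1_diff (n : ℕ) (s : ℕ → ℤ) (t : ℤ) (hs0 : s 0 = -t) :
    IsDiffIneqAdd (ssAlpha n) (List.ofFn (fun i : Fin (n + 1) => f1fun n s t (i : ℕ)))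
      (ssBS n) (ssBT n s) := by
  rw [diff_iff]
  intro κ
  simp only [ssBS, ssAlpha, ssBT, zero_add]
  rw [sum_get (List.ofFn fun i : Fin (n + 1) => f1fun n s t (i : ℕ))
    (fun f => contrib f ((κ : ℕ) : ℤ)), List.map_ofFn, List.sum_ofFn]
  simp only [Function.comp]
  have hκn : (κ : ℕ) ≤ n := by omega
  rw [Fin.sum_univ_succ]
  have h0 : contrib (f1fun n s t ((0 : Fin (n + 1)) : ℕ)) ((κ : ℕ) : ℤ) = -(t : ℝ) := by
    show contrib (f1fun n s t 0) ((κ : ℕ) : ℤ) = -(t : ℝ)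
    unfold f1fun
    rw [if_pos rfl]
    exact contrib_top n _ _ hκn
  rw [h0]
  have hsucc : ∀ i : Fin n,
      contrib (f1fun n s t ((i.succ : Fin (n + 1)) : ℕ)) ((κ : ℕ) : ℤ)
        = (if (i : ℕ) + 1 ≤ (κ : ℕ) then (s ((i : ℕ) + 1) : ℝ) else 0) := by
    intro i
    have hv : ((i.succ : Fin (n + 1)) : ℕ) = (i : ℕ) + 1 := rfl
    rw [hv]
    unfold f1fun
    rw [if_neg (by omega)]
    exact contrib_suffix _ _ _
  rw [Finset.sum_congr rfl (fun i _ => hsucc i)]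
  rw [Fin.sum_univ_eq_sum_range (fun j => if j + 1 ≤ (κ : ℕ) then (s (j + 1) : ℝ) else 0) n]
  have : ∀ j, (if j + 1 ≤ (κ : ℕ) then (s (j + 1) : ℝ) else 0)
      = (fun m => if m ≤ (κ : ℕ) then (s m : ℝ) else 0) (j + 1) := fun j => rfl
  rw [Finset.sum_congr rfl (fun j _ => this j),
    sum_shift n (fun m => if m ≤ (κ : ℕ) then (s m : ℝ) else 0),
    icc_filter n (κ : ℕ) hκn, rhs_form n s t hs0 (κ : ℕ)]
  ring

end SSAux

theorem subsetSum_exists_canonical_best_diff (n : ℕ) (s : ℕ → ℤ) (t : ℤ)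
    (ht : 0 < t) (hs0 : s 0 = -t) (hpos : ∀ i, 1 ≤ i → i ≤ n → 0 < s i) :
    ∃ F : List OpIneqAdd,
      IsBestDiffIneqAdd (ssAlpha n) F (ssBS n) (ssBT n s) ∧
      ∀ k, 1 ≤ k → k ≤ n →
        (∃! i : Fin F.length, IsGapOpAt k (F.get i)) ∧
        ∀ i : Fin F.length, IsGapOpAt k (F.get i) →
          F.get i = ⟨true, (k : ℝ) - 1, -(s k : ℝ)⟩ ∨
          F.get i = ⟨false, (k : ℝ), (s k : ℝ)⟩ := by
  classical
  by_cases hsol : ∃ L : List OpIneqAdd,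
      IsDiffIneqAdd (ssAlpha n) L (ssBS n) (ssBT n s) ∧ L.length = n
  · obtain ⟨L, hL, hlen⟩ := hsol
    obtain ⟨Sp, hSp, hsum⟩ := SSAux.extract_subset n s t ht hs0 hpos L hL hlen
    refine ⟨List.ofFn (fun i : Fin n => SSAux.canonOp s Sp ((i : ℕ) + 1)),
      ⟨SSAux.canon_diff n s t hs0 Sp hSp hsum, ?_⟩, ?_⟩
    · intro L' hL'
      rw [List.length_ofFn]
      exact SSAux.length_lb n s hpos L' hL'
    · intro k hk1 hkn
      have hiff : ∀ j : Fin n, IsGapOpAt k (SSAux.canonOp s Sp ((j : ℕ) + 1)) ↔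
          j = (⟨k - 1, by omega⟩ : Fin n) := by
        intro j
        rw [SSAux.gap_canon]
        constructor
        · intro hj
          apply Fin.ext
          simp only
          omega
        · intro hj
          have := congrArg Fin.val hj
          simp only at this
          omega
      obtain ⟨hexu, hvalp⟩ := SSAux.exu n (fun i : Fin n => SSAux.canonOp s Sp ((i : ℕ) + 1))
        k (⟨k - 1, by omega⟩ : Fin n) hiff
      refine ⟨hexu, fun i hi => ?_⟩
      rw [hvalp i hi]
      have hk' : ((⟨k - 1, by omega⟩ : Fin n) : ℕ) + 1 = k := by
        simp only
        omega
      rw [hk']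
      exact SSAux.canon_form s Sp k
  · refine ⟨List.ofFn (fun i : Fin (n + 1) => SSAux.f1fun n s t (i : ℕ)),
      ⟨SSAux.f1_diff n s t hs0, ?_⟩, ?_⟩
    · intro L' hL'
      have h1 := SSAux.length_lb n s hpos L' hL'
      have h2 : L'.length ≠ n := fun he => hsol ⟨L', hL', he⟩
      rw [List.length_ofFn]
      omega
    · intro k hk1 hkn
      have hiff : ∀ j : Fin (n + 1), IsGapOpAt k (SSAux.f1fun n s t (j : ℕ)) ↔
          j = (⟨k, by omega⟩ : Fin (n + 1)) := by
        intro j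
        rw [SSAux.gap_f1 n s t k (j : ℕ) hk1 hkn]
        constructor
        · intro hj
          apply Fin.ext
          simpa using hj
        · intro hj
          have := congrArg Fin.val hj
          simpa using this
      obtain ⟨hexu, hvalp⟩ := SSAux.exu (n + 1) (fun i : Fin (n + 1) => SSAux.f1fun n s t (i : ℕ))
        k (⟨k, by omega⟩ : Fin (n + 1)) hiff
      refine ⟨hexu, fun i hi => ?_⟩
      rw [hvalp i hi]
      right
      show SSAux.f1fun n s t k = _
      unfold SSAux.f1fun
      rw [if_neg (by omega)]
      rfl
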